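/- arXiv:1910.02589 — 2 statements merged into one kernel-verified Lean document; each statement's English description precedes it below -/
import Mathlib

section
/- Let α, β ∈ K̄ be distinct elements algebraic over K, and write ν(α − β) = b/c in lowest terms (c the positive denominator). If c = [K(α):K] · [K(β):K], then [K(α,β):K] = [K(α):K] · [K(β):K]; in other words, K(α) and K(β) are linearly disjoint over K. -/
open IntermediateField Polynomial

/-- Let `K` be a field, Henselian with respect to a discrete valuation
`ν_K` with algebraically closed residue field, with fixed algebraic closure `Kbar` and
(unique, Galois-invariant) extension `v` of `ν_K`, normalized so that a uniformizer
`πK` satisfies `v πK = 1` and `v` is `ℤ`-valued on `K`.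

Let `α, β ∈ Kbar` be distinct elements (algebraic over `K`, automatically), and write
`ν(α − β) = b/c` in lowest terms (`c = (v (α − β)).den` the positive denominator).
If `c = [K(α):K]·[K(β):K]`, then `[K(α,β):K] = [K(α):K]·[K(β):K]`; in other words,
`K(α)` and `K(β)` are linearly disjoint over `K`. -/
theorem linearly_disjoint_of_denominator
    {K Kbar : Type*} [Field K] [Field Kbar] [Algebra K Kbar] [IsAlgClosure K Kbar]
    (v : Kbar → ℚ)
    (hv_mul : ∀ x y : Kbar, x ≠ 0 → y ≠ 0 → v (x * y) = v x + v y)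
    (hv_add : ∀ x y : Kbar, x ≠ 0 → y ≠ 0 → x + y ≠ 0 → min (v x) (v y) ≤ v (x + y))
    (hv_gal : ∀ (σ : Kbar ≃ₐ[K] Kbar) (x : Kbar), v (σ x) = v x)
    (hv_int : ∀ x : K, x ≠ 0 → ∃ n : ℤ, v (algebraMap K Kbar x) = (n : ℚ))
    (πK : K) (hπK : πK ≠ 0 ∧ v (algebraMap K Kbar πK) = 1)
    (hv_res : ∀ x : Kbar, x ≠ 0 → 0 ≤ v x →
      ∃ η : K, x = algebraMap K Kbar η ∨ 0 < v (x - algebraMap K Kbar η))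
    (α β : Kbar) (hne : α ≠ β)
    (hden : (v (α - β)).den =
      Module.finrank K ↥(IntermediateField.adjoin K ({α} : Set Kbar)) *
      Module.finrank K ↥(IntermediateField.adjoin K ({β} : Set Kbar))) :
    Module.finrank K ↥(IntermediateField.adjoin K ({α, β} : Set Kbar)) =
      Module.finrank K ↥(IntermediateField.adjoin K ({α} : Set Kbar)) *
      Module.finrank K ↥(IntermediateField.adjoin K ({β} : Set Kbar)) := by
  -- basic facts about v
  have hv1 : v 1 = 0 := by
    have := hv_mul 1 1 one_ne_zero one_ne_zero
    rw [one_mul] at this; linarith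
  have hvneg1 : v (-1 : Kbar) = 0 := by
    have := hv_mul (-1) (-1) (by norm_num) (by norm_num)
    rw [neg_mul_neg, one_mul, hv1] at this; linarith
  have hvneg : ∀ x : Kbar, x ≠ 0 → v (-x) = v x := by
    intro x hx
    have := hv_mul (-1) x (by norm_num) hx
    rw [neg_one_mul, hvneg1, zero_add] at this; exact this
  -- product lemma over multisets
  have hprod : ∀ (c : ℚ) (s : Multiset Kbar), (∀ x ∈ s, x ≠ 0 ∧ v x = c) →
      s.prod ≠ 0 ∧ v s.prod = (s.card : ℚ) * c := by
    intro c s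
    induction s using Multiset.induction with
    | empty => intro _; simpa using hv1
    | cons a t ih =>
      intro h
      have ha := h a (Multiset.mem_cons_self a t)
      have ht := ih (fun x hx => h x (Multiset.mem_cons_of_mem hx))
      constructor
      · rw [Multiset.prod_cons]; exact mul_ne_zero ha.1 ht.1
      · rw [Multiset.prod_cons, hv_mul a t.prod ha.1 ht.1, ha.2, ht.2,
          Multiset.card_cons]
        push_cast; ring
  haveI : IsAlgClosed Kbar := IsAlgClosure.isAlgClosed K
  -- key lemma: denominator of v γ divides the degree of the minimal polynomial
  have hkey : ∀ γ : Kbar, γ ≠ 0 → ((v γ).den : ℕ) ∣ (minpoly K γ).natDegree := by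
    intro γ hγ
    have hint : IsIntegral K γ := Algebra.IsIntegral.isIntegral γ
    set p : K[X] := minpoly K γ with hp
    set P : Kbar[X] := p.map (algebraMap K Kbar) with hP
    have hmonic : P.Monic := (minpoly.monic hint).map _
    have hsplits : P.Splits :=
      IsAlgClosed.splits P
    have hdeg : P.roots.card = p.natDegree := by
      rw [(splits_iff_card_roots).mp hsplits, natDegree_map]
    have hPfac : P = (P.roots.map fun a => X - C a).prod :=
      hsplits.eq_prod_roots_of_monic hmonic
    -- every root of P has valuation v γ and is nonzero
    have hroot : ∀ r ∈ P.roots, r ≠ 0 ∧ v r = v γ := by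
      intro r hr
      have hrz : aeval r p = 0 := by
        have := isRoot_of_mem_roots hr
        rwa [IsRoot, eval_map, ← aeval_def] at this
      have hr0 : r ≠ 0 := by
        rintro rfl
        rw [aeval_def, eval₂_at_zero] at hrz
        exact minpoly.coeff_zero_ne_zero hint hγ
          ((map_eq_zero_iff _ (algebraMap K Kbar).injective).mp hrz)
      obtain ⟨σ, hσ⟩ := minpoly.exists_algEquiv_of_root
        (Algebra.IsAlgebraic.isAlgebraic γ) hrz
      exact ⟨hr0, by rw [← hσ, hv_gal]⟩
    -- evaluate at 0
    have heval : P.eval 0 = (P.roots.map fun a => -a).prod := by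
      conv_lhs => rw [hPfac]
      rw [eval_multiset_prod, Multiset.map_map]
      congr 1
      apply Multiset.map_congr rfl
      intro a _
      simp
    have hc0 : p.coeff 0 ≠ 0 := minpoly.coeff_zero_ne_zero hint hγ
    have hn := hv_int (p.coeff 0) hc0
    obtain ⟨n, hn⟩ := hn
    have h1 : v (P.eval 0) = (n : ℚ) := by
      rw [← hn]; congr 1
      rw [hP, eval_map, eval₂_at_zero]
    have h2 := hprod (v γ) (P.roots.map fun a => -a) ?_
    · rw [heval, h2.2, Multiset.card_map, hdeg] at h1
      have hd : 0 < p.natDegree := minpoly.natDegree_pos hint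
      have hvγ : v γ = (n : ℚ) / (p.natDegree : ℚ) := by
        field_simp at h1 ⊢
        linarith [h1]
      have : ((v γ).den : ℤ) ∣ (p.natDegree : ℤ) := by
        rw [hvγ, show ((n : ℚ) / (p.natDegree : ℚ)) = Rat.divInt n (p.natDegree : ℤ) by
          rw [Rat.divInt_eq_div]; push_cast; ring]
        exact Rat.den_dvd n (p.natDegree : ℤ)
      exact_mod_cast this
    · intro x hx
      obtain ⟨a, ha, rfl⟩ := Multiset.mem_map.mp hx
      obtain ⟨ha0, hav⟩ := hroot a ha
      exact ⟨neg_ne_zero.mpr ha0, by rw [hvneg a ha0, hav]⟩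
  -- now the main argument
  set γ : Kbar := α - β with hγdef
  have hγ : γ ≠ 0 := sub_ne_zero.mpr hne
  set L := IntermediateField.adjoin K ({α, β} : Set Kbar) with hL
  have hαint : IsIntegral K α := Algebra.IsIntegral.isIntegral α
  have hβint : IsIntegral K β := Algebra.IsIntegral.isIntegral β
  have hLsup : L = IntermediateField.adjoin K ({α} : Set Kbar) ⊔
      IntermediateField.adjoin K ({β} : Set Kbar) := by
    rw [hL, Set.insert_eq, IntermediateField.adjoin_union]
  haveI : FiniteDimensional K ↥(IntermediateField.adjoin K ({α} : Set Kbar)) :=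
    IntermediateField.adjoin.finiteDimensional hαint
  haveI : FiniteDimensional K ↥(IntermediateField.adjoin K ({β} : Set Kbar)) :=
    IntermediateField.adjoin.finiteDimensional hβint
  haveI : FiniteDimensional K ↥L := by
    rw [hLsup]; exact IntermediateField.finiteDimensional_sup _ _
  -- γ as element of L
  have hγL : γ ∈ L := by
    apply sub_mem
    · exact IntermediateField.subset_adjoin K _ (by simp)
    · exact IntermediateField.subset_adjoin K _ (by simp)
  have hmp : minpoly K (⟨γ, hγL⟩ : L) = minpoly K γ := by
    rw [← minpoly.algHom_eq L.val L.val.injective ⟨γ, hγL⟩]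
    rfl
  have hdvd1 : (minpoly K γ).natDegree ∣ Module.finrank K ↥L := by
    rw [← hmp]
    exact minpoly.degree_dvd (Algebra.IsIntegral.isIntegral _)
  have hdvd : (v γ).den ∣ Module.finrank K ↥L := dvd_trans (hkey γ hγ) hdvd1
  rw [hden] at hdvd
  have hle : Module.finrank K ↥L ≤
      Module.finrank K ↥(IntermediateField.adjoin K ({α} : Set Kbar)) *
      Module.finrank K ↥(IntermediateField.adjoin K ({β} : Set Kbar)) := by
    rw [hLsup]; exact IntermediateField.finrank_sup_le _ _
  have hpos : 0 < Module.finrank K ↥L := Module.finrank_pos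
  exact Nat.le_antisymm hle (Nat.le_of_dvd hpos hdvd)
end

section
/- Let n ≥ 1 be an integer. Let d₁ = 1 and let d₁ | d₂ | ⋯ | d_n | d_{n+1} be positive integers; set e_i := d_{i+1}/d_i for 1 ≤ i ≤ n and assume e_i ≥ 2 for all i; write e := e_n. Let 0 < λ₁ < λ₂ < ⋯ < λ_n be rational numbers such that λ₁ ≥ 1/e₁ and such that d_i·λ_{i−1} is a positive integer for every 2 ≤ i ≤ n. Set λ₀ := 0 and e₀ := 1, and define B₀ := Σ_{i=1}^{n} ( ⌊d_i λ_i⌋ − d_i e_{i−1} λ_{i−1} + e_i ). Then B₀ ≤ ⌊d_n λ_n⌋ + e, and the inequality is strict unless n = 1, or n = 2 and λ₁ = 1/e₁. -/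
open Finset

private lemma sum_split_aux (F G : ℕ → ℚ) (hG1 : G 1 = 0) (m : ℕ) :
    ∑ i ∈ Finset.Icc 1 (m + 1), (F i - G i)
      = F (m + 1) + ∑ i ∈ Finset.Icc 1 m, (F i - G (i + 1)) := by
  induction m with
  | zero => simp [hG1]
  | succ k ih =>
    rw [Finset.sum_Icc_succ_top (by omega : 1 ≤ k + 1 + 1), ih,
        Finset.sum_Icc_succ_top (by omega : 1 ≤ k + 1)]
    ring

private lemma key_term (e M : ℕ) (he : 2 ≤ e) (hM : 1 ≤ M) (x : ℚ)
    (hx : (e : ℚ) * x = M) :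
    ((⌊x⌋ : ℚ) + e ≤ e * M) ∧ (2 ≤ M → (⌊x⌋ : ℚ) + e < e * M) := by
  have he' : (2 : ℚ) ≤ e := by exact_mod_cast he
  have hfl : (⌊x⌋ : ℚ) ≤ x := Int.floor_le x
  have hepos : (0 : ℚ) < e := by linarith
  have h1 : (e : ℚ) * ⌊x⌋ ≤ M := by nlinarith
  have hstrict : 2 ≤ M → (⌊x⌋ : ℚ) + e < e * M := by
    intro h2
    have hM' : (2 : ℚ) ≤ M := by exact_mod_cast h2
    have h3 : (M : ℚ) + e * e < e * e * M := by
      nlinarith [mul_nonneg (by linarith : (0:ℚ) ≤ (M:ℚ) - 2)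
        (by nlinarith : (0:ℚ) ≤ (e:ℚ) * e - 1),
        (by nlinarith : (4:ℚ) ≤ (e:ℚ) * e)]
    have h4 : (e : ℚ) * ((⌊x⌋ : ℚ) + e) < e * (e * M) := by nlinarith
    exact lt_of_mul_lt_mul_left h4 hepos.le
  refine ⟨?_, hstrict⟩
  rcases eq_or_lt_of_le hM with h | h
  · -- M = 1
    have hx1 : x = 1 / e := by
      field_simp
      rw [mul_comm] at hx
      rw [hx, ← h]; norm_num
    have hfl0 : ⌊x⌋ = 0 := by
      rw [Int.floor_eq_zero_iff]
      constructor
      · rw [hx1]; positivity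
      · rw [hx1]
        rw [div_lt_one hepos]; linarith
    rw [hfl0, ← h]; push_cast; linarith
  · exact le_of_lt (hstrict h)

/-- Let `n ≥ 1` be an integer.  Let `d₁ = 1` and let
`d₁ ∣ d₂ ∣ ⋯ ∣ d_n ∣ d_{n+1}` be positive integers; set `e_i := d_{i+1}/d_i` for
`1 ≤ i ≤ n` (so `d_{i+1} = e_i · d_i`) and assume `e_i ≥ 2` for all `i`; write
`e := e_n`.  Let `0 < λ₁ < λ₂ < ⋯ < λ_n` be rational numbers such that `λ₁ ≥ 1/e₁`
and such that `d_i·λ_{i−1}` is a positive integer for every `2 ≤ i ≤ n`.  Set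
`λ₀ := 0` and `e₀ := 1`, and define
`B₀ := Σ_{i=1}^{n} ( ⌊d_i λ_i⌋ − d_i e_{i−1} λ_{i−1} + e_i )`.
Then `B₀ ≤ ⌊d_n λ_n⌋ + e`, and the inequality is strict unless `n = 1`, or `n = 2`
and `λ₁ = 1/e₁`. -/
theorem B0_le_floor_add_e
    (n : ℕ) (hn : 1 ≤ n)
    (d e : ℕ → ℕ) (lam : ℕ → ℚ)
    (hd1 : d 1 = 1)
    (hdpos : ∀ i, 1 ≤ i → i ≤ n + 1 → 0 < d i)
    (he0 : e 0 = 1)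
    (hde : ∀ i, 1 ≤ i → i ≤ n → d (i + 1) = e i * d i)
    (he2 : ∀ i, 1 ≤ i → i ≤ n → 2 ≤ e i)
    (hlam0 : lam 0 = 0)
    (hlampos : 0 < lam 1)
    (hlammono : ∀ i, 1 ≤ i → i + 1 ≤ n → lam i < lam (i + 1))
    (hlam1 : (1 : ℚ) / (e 1 : ℚ) ≤ lam 1)
    (hint : ∀ i, 2 ≤ i → i ≤ n → ∃ m : ℕ, 0 < m ∧ (d i : ℚ) * lam (i - 1) = (m : ℚ))
    (B₀ : ℚ)
    (hB₀ : B₀ = ∑ i ∈ Finset.Icc 1 n,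
      ((⌊(d i : ℚ) * lam i⌋ : ℚ) - (d i : ℚ) * (e (i - 1) : ℚ) * lam (i - 1)
        + (e i : ℚ))) :
    B₀ ≤ (⌊(d n : ℚ) * lam n⌋ : ℚ) + (e n : ℚ) ∧
      (¬ (n = 1 ∨ (n = 2 ∧ lam 1 = (1 : ℚ) / (e 1 : ℚ))) →
        B₀ < (⌊(d n : ℚ) * lam n⌋ : ℚ) + (e n : ℚ)) := by
  obtain ⟨m, rfl⟩ : ∃ m, n = m + 1 := ⟨n - 1, by omega⟩
  have hG1 : (fun i => (d i : ℚ) * (e (i - 1) : ℚ) * lam (i - 1)) 1 = 0 := by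
    simp [hlam0]
  have hB : B₀ = ((⌊(d (m + 1) : ℚ) * lam (m + 1)⌋ : ℚ) + (e (m + 1) : ℚ))
      + ∑ i ∈ Finset.Icc 1 m,
          (((⌊(d i : ℚ) * lam i⌋ : ℚ) + (e i : ℚ))
            - (d (i + 1) : ℚ) * (e i : ℚ) * lam i) := by
    rw [hB₀]
    have := sum_split_aux (fun i => (⌊(d i : ℚ) * lam i⌋ : ℚ) + (e i : ℚ))
      (fun i => (d i : ℚ) * (e (i - 1) : ℚ) * lam (i - 1)) hG1 m
    simp only [Nat.add_sub_cancel] at this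
    rw [← this]
    exact Finset.sum_congr rfl (fun i _ => by ring)
  have hterm : ∀ i, 1 ≤ i → i ≤ m →
      (((⌊(d i : ℚ) * lam i⌋ : ℚ) + (e i : ℚ)) - (d (i + 1) : ℚ) * (e i : ℚ) * lam i ≤ 0)
      ∧ ((d (i + 1) : ℚ) * lam i ≠ 1 →
        ((⌊(d i : ℚ) * lam i⌋ : ℚ) + (e i : ℚ)) - (d (i + 1) : ℚ) * (e i : ℚ) * lam i < 0) := by
    intro i h1 h2
    obtain ⟨M, hMpos, hMeq⟩ := hint (i + 1) (by omega) (by omega)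
    simp only [Nat.add_sub_cancel] at hMeq
    have hdd : d (i + 1) = e i * d i := hde i h1 (by omega)
    have he2' : 2 ≤ e i := he2 i h1 (by omega)
    have hx : (e i : ℚ) * ((d i : ℚ) * lam i) = M := by
      rw [← hMeq, hdd]; push_cast; ring
    obtain ⟨hle, hlt⟩ := key_term (e i) M he2' hMpos _ hx
    have hGval : (d (i + 1) : ℚ) * (e i : ℚ) * lam i = (e i : ℚ) * M := by
      rw [← hMeq]; ring
    constructor
    · rw [hGval]; linarith
    · intro hne1
      have hM1 : M ≠ 1 := by
        rintro rfl; apply hne1; rw [hMeq]; norm_num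
      rw [hGval]; linarith [hlt (by omega)]
  constructor
  · have hs : ∑ i ∈ Finset.Icc 1 m,
        (((⌊(d i : ℚ) * lam i⌋ : ℚ) + (e i : ℚ))
          - (d (i + 1) : ℚ) * (e i : ℚ) * lam i) ≤ 0 :=
      Finset.sum_nonpos (fun i hi =>
        (hterm i (Finset.mem_Icc.mp hi).1 (Finset.mem_Icc.mp hi).2).1)
    linarith [hB]
  · intro hne
    push_neg at hne
    have hm1 : 1 ≤ m := by omega
    obtain ⟨i0, hi0mem, hi0⟩ : ∃ i0 ∈ Finset.Icc 1 m,
        ((⌊(d i0 : ℚ) * lam i0⌋ : ℚ) + (e i0 : ℚ))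
          - (d (i0 + 1) : ℚ) * (e i0 : ℚ) * lam i0 < 0 := by
      have he1 : 2 ≤ e 1 := he2 1 le_rfl (by omega)
      have he1' : (0 : ℚ) < (e 1 : ℚ) := by
        have : (2 : ℚ) ≤ (e 1 : ℚ) := by exact_mod_cast he1
        linarith
      have hd2 : d 2 = e 1 := by rw [hde 1 le_rfl (by omega), hd1, mul_one]
      by_cases hcase : lam 1 = 1 / (e 1 : ℚ)
      · -- n ≠ 2, so m ≥ 2, use i0 = 2
        have hm2 : 2 ≤ m := by
          have := hne.2
          by_contra h
          exact (this (by omega)) hcase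
        refine ⟨2, Finset.mem_Icc.mpr ⟨by omega, hm2⟩, ?_⟩
        refine (hterm 2 (by omega) hm2).2 ?_
        have he22 : 2 ≤ e 2 := he2 2 (by omega) (by omega)
        have he22' : (2 : ℚ) ≤ (e 2 : ℚ) := by exact_mod_cast he22
        have hd3 : d 3 = e 2 * e 1 := by
          rw [hde 2 (by omega) (by omega), hd2]
        have hlam12 : lam 1 < lam 2 := hlammono 1 le_rfl (by omega)
        have : (1 : ℚ) < (d 3 : ℚ) * lam 2 := by
          have hd3' : (d 3 : ℚ) = (e 2 : ℚ) * (e 1 : ℚ) := by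
            rw [hd3]; push_cast; ring
          rw [hd3']
          have h1 : (e 2 : ℚ) * (e 1 : ℚ) * lam 1 = (e 2 : ℚ) := by
            rw [hcase]; field_simp
          have hd3pos : (0 : ℚ) < (e 2 : ℚ) * (e 1 : ℚ) := by nlinarith
          nlinarith
        exact ne_of_gt this
      · refine ⟨1, Finset.mem_Icc.mpr ⟨le_rfl, hm1⟩, ?_⟩
        refine (hterm 1 le_rfl hm1).2 ?_
        have hlt : 1 / (e 1 : ℚ) < lam 1 := lt_of_le_of_ne hlam1 (fun h => hcase h.symm)
        have : (1 : ℚ) < (d 2 : ℚ) * lam 1 := by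
          have hd2' : (d 2 : ℚ) = (e 1 : ℚ) := by rw [hd2]
          rw [hd2']
          rw [div_lt_iff₀ he1'] at hlt
          rw [mul_comm]; linarith
        exact ne_of_gt this
    have hslt : ∑ i ∈ Finset.Icc 1 m,
        (((⌊(d i : ℚ) * lam i⌋ : ℚ) + (e i : ℚ))
          - (d (i + 1) : ℚ) * (e i : ℚ) * lam i) < ∑ i ∈ Finset.Icc 1 m, (0 : ℚ) :=
      Finset.sum_lt_sum (fun i hi =>
        (hterm i (Finset.mem_Icc.mp hi).1 (Finset.mem_Icc.mp hi).2).1) ⟨i0, hi0mem, hi0⟩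
    rw [Finset.sum_const_zero] at hslt
    linarith [hB]
end
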